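/- Let h(w) = ∏_{n≥0} (1 + w^{2^n} + w^{2·2^n}) ∈ ℤ[[w]] (convergent for 0 ≤ w < 1). Set τ = log₂ 3. Then there exist constants 0 < C₁ ≤ C₂ such that C₁·(1−w)^{−τ} ≤ h(w) ≤ C₂·(1−w)^{−τ} for all w in some interval [t, 1) with 0 < t < 1. -/

import Mathlib

set_option maxHeartbeats 2000000

open Real Finset

theorem length_product_asymptotics :
    ∃ t : ℝ, 0 < t ∧ t < 1 ∧ ∃ C₁ C₂ : ℝ, 0 < C₁ ∧ C₁ ≤ C₂ ∧
      ∀ w : ℝ, t ≤ w → w < 1 →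
        C₁ * (1 - w) ^ (-(Real.log 3 / Real.log 2)) ≤
          (∏' n : ℕ, (1 + w ^ (2 ^ n) + w ^ (2 * 2 ^ n))) ∧
        (∏' n : ℕ, (1 + w ^ (2 ^ n) + w ^ (2 * 2 ^ n))) ≤
          C₂ * (1 - w) ^ (-(Real.log 3 / Real.log 2)) := by
  set τ : ℝ := Real.log 3 / Real.log 2 with hτ
  have hlog2 : 0 < Real.log 2 := Real.log_pos (by norm_num)
  have hlog3 : 0 < Real.log 3 := Real.log_pos (by norm_num)
  have hτ0 : 0 ≤ τ := le_of_lt (div_pos hlog3 hlog2)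
  have hτlog : τ * Real.log 2 = Real.log 3 := div_mul_cancel₀ _ (ne_of_gt hlog2)
  refine ⟨1/2, by norm_num, by norm_num,
    (Real.log 2 / 2) ^ τ / 16, Real.exp 2 * (2 * Real.log 2) ^ τ, ?_, ?_, ?_⟩
  · positivity
  · calc (Real.log 2 / 2) ^ τ / 16 ≤ (Real.log 2 / 2) ^ τ := by
          have : (0:ℝ) ≤ (Real.log 2 / 2) ^ τ := (Real.rpow_pos_of_pos (by positivity) τ).le
          linarith
      _ ≤ (2 * Real.log 2) ^ τ :=
          Real.rpow_le_rpow (by positivity) (by linarith) hτ0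
      _ ≤ Real.exp 2 * (2 * Real.log 2) ^ τ := by
          nlinarith [Real.one_le_exp (by norm_num : (0:ℝ) ≤ 2),
            (Real.rpow_pos_of_pos (by positivity : (0:ℝ) < 2 * Real.log 2) τ)]
  intro w hw1 hw2
  have hw0 : 0 < w := lt_of_lt_of_le (by norm_num) hw1
  have hwle : w ≤ 1 := hw2.le
  set f : ℕ → ℝ := fun n => 1 + w ^ (2 ^ n) + w ^ (2 * 2 ^ n) with hf
  have hxpos : ∀ k : ℕ, 0 < w ^ k := fun k => pow_pos hw0 k
  have hxle : ∀ k : ℕ, w ^ k ≤ 1 := fun k => pow_le_one₀ hw0.le hwle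
  have hfpos : ∀ n, 0 < f n := fun n => by
    have := (hxpos (2^n)).le; have := (hxpos (2*2^n)).le; simp only [hf]; linarith
  have hf3 : ∀ n, f n ≤ 3 := fun n => by
    have := hxle (2^n); have := hxle (2*2^n); simp only [hf]; linarith
  -- log bounds
  have hlog_nonneg : ∀ n, 0 ≤ Real.log (f n) := fun n => by
    apply Real.log_nonneg
    have := (hxpos (2^n)).le; have := (hxpos (2*2^n)).le; simp only [hf]; linarith
  have hlog_le : ∀ n, Real.log (f n) ≤ 2 * w ^ (2 ^ n) := fun n => by
    have h1 := Real.log_le_sub_one_of_pos (hfpos n)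
    have h2 : w ^ (2 * 2 ^ n) ≤ w ^ (2 ^ n) :=
      pow_le_pow_of_le_one hw0.le hwle (by omega)
    simp only [hf] at h1 ⊢; linarith
  have hlog_le3 : ∀ n, Real.log (f n) ≤ Real.log 3 := fun n =>
    Real.log_le_log (hfpos n) (hf3 n)
  have hlog_ge : ∀ n, Real.log 3 + (2 * 2 ^ n : ℕ) * Real.log w ≤ Real.log (f n) := by
    intro n
    have hsq : w ^ (2 * 2 ^ n) = (w ^ (2 ^ n)) ^ 2 := by
      rw [← pow_mul, mul_comm]
    have hlb : 3 * w ^ (2 * 2 ^ n) ≤ f n := by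
      have h0 := (hxpos (2^n)).le
      have h1 := hxle (2^n)
      simp only [hf, hsq]; nlinarith
    calc Real.log 3 + (2 * 2 ^ n : ℕ) * Real.log w
        = Real.log (3 * w ^ (2 * 2 ^ n)) := by
          rw [Real.log_mul (by norm_num) (ne_of_gt (hxpos _)), Real.log_pow]
      _ ≤ Real.log (f n) := Real.log_le_log (by positivity) hlb
  -- summability
  have hsummable : Summable fun n => Real.log (f n) := by
    apply Summable.of_nonneg_of_le hlog_nonneg
      (fun n => (hlog_le n).trans ?_)
      (((summable_geometric_of_lt_one hw0.le hw2)).mul_left 2)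
    have : w ^ (2 ^ n) ≤ w ^ n := pow_le_pow_of_le_one hw0.le hwle (Nat.le_of_lt (Nat.lt_two_pow_self (n := n)))
    linarith
  -- the product equals exp of the sum of logs
  have htprod : (∏' n : ℕ, (1 + w ^ (2 ^ n) + w ^ (2 * 2 ^ n)))
      = Real.exp (∑' n, Real.log (f n)) := by
    have hp : HasProd f (Real.exp (∑' n, Real.log (f n))) := by
      have h := hsummable.hasSum.rexp
      have he : (Real.exp ∘ fun n => Real.log (f n)) = f :=
        funext fun n => Real.exp_log (hfpos n)
      rwa [he] at h
    exact hp.tprod_eq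
  -- choose N
  have hex : ∃ n : ℕ, w ^ (2 ^ n) < 1/2 := by
    obtain ⟨n, hn⟩ := exists_pow_lt_of_lt_one (by norm_num : (0:ℝ) < 1/2) hw2
    exact ⟨n, lt_of_le_of_lt (pow_le_pow_of_le_one hw0.le hwle
      (Nat.le_of_lt (Nat.lt_two_pow_self (n := n)))) hn⟩
  set M := Nat.find hex with hM
  have hMspec : w ^ (2 ^ M) < 1/2 := Nat.find_spec hex
  have hM0 : 0 < M := by
    rcases Nat.eq_zero_or_pos M with h | h
    · exfalso; rw [h] at hMspec; simp at hMspec; linarith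
    · exact h
  set N := M - 1 with hN
  have hNM : N + 1 = M := Nat.succ_pred_eq_of_pos hM0
  have hN1 : 1/2 ≤ w ^ (2 ^ N) := le_of_not_gt (Nat.find_min hex (by omega))
  have hN2 : w ^ (2 ^ (N + 1)) < 1/2 := by rw [hNM]; exact hMspec
  -- split the sum
  have hsplit := Summable.sum_add_tsum_nat_add (N + 1) hsummable
  set H := ∑ n ∈ Finset.range (N + 1), Real.log (f n) with hH
  set T := ∑' n : ℕ, Real.log (f (n + (N + 1))) with hT
  -- tail bounds
  have hTsummable : Summable fun n : ℕ => Real.log (f (n + (N + 1))) :=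
    (summable_nat_add_iff (N + 1)).2 hsummable
  have hT0 : 0 ≤ T := tsum_nonneg fun n => hlog_nonneg _
  have hT2 : T ≤ 2 := by
    have hle : ∀ k : ℕ, Real.log (f (k + (N + 1))) ≤ (1/2 : ℝ) ^ k := by
      intro k
      have h1 : w ^ (2 ^ (k + (N + 1))) = (w ^ (2 ^ (N + 1))) ^ (2 ^ k) := by
        rw [← pow_mul, ← pow_add, add_comm (N+1) k]
      have h2 : (w ^ (2 ^ (N + 1))) ^ (2 ^ k) ≤ (1/2 : ℝ) ^ (2 ^ k) :=
        pow_le_pow_left₀ (hxpos _).le hN2.le _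
      have h3 : ((1:ℝ)/2) ^ (2 ^ k) ≤ (1/2 : ℝ) ^ (k + 1) :=
        pow_le_pow_of_le_one (by norm_num) (by norm_num) (Nat.lt_two_pow_self (n := k))
      have h4 := hlog_le (k + (N + 1))
      have : (1/2:ℝ) ^ (k+1) = (1/2) * (1/2)^k := by ring
      rw [h1] at h4
      nlinarith [h2, h3, h4]
    calc T ≤ ∑' k : ℕ, (1/2 : ℝ) ^ k :=
          Summable.tsum_le_tsum hle hTsummable (summable_geometric_of_lt_one (by norm_num) (by norm_num))
      _ = 2 := by rw [tsum_geometric_of_lt_one (by norm_num) (by norm_num)]; norm_num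
  -- head bounds
  have hlogw : Real.log w ≤ 0 := Real.log_nonpos hw0.le hwle
  have h2N : -Real.log 2 ≤ (2:ℝ) ^ N * Real.log w := by
    have := Real.log_le_log (by norm_num : (0:ℝ) < 1/2) hN1
    rw [Real.log_pow] at this
    simp only [Real.log_div one_ne_zero two_ne_zero, Real.log_one] at this
    push_cast at this
    linarith
  have hHub : H ≤ (N + 1 : ℝ) * Real.log 3 := by
    calc H ≤ ∑ n ∈ Finset.range (N+1), Real.log 3 :=
          Finset.sum_le_sum fun n _ => hlog_le3 n
      _ = (N + 1 : ℝ) * Real.log 3 := by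
          rw [Finset.sum_const, Finset.card_range]; push_cast; ring
  have hHlb : (N + 1 : ℝ) * Real.log 3 - 4 * Real.log 2 ≤ H := by
    have hsum : ∑ n ∈ Finset.range (N+1),
        (Real.log 3 + ((2 * 2 ^ n : ℕ) : ℝ) * Real.log w) ≤ H :=
      Finset.sum_le_sum fun n _ => hlog_ge n
    have hgeom : ∑ n ∈ Finset.range (N+1), ((2 * 2 ^ n : ℕ) : ℝ)
        = 2 * ((2:ℝ) ^ (N+1) - 1) := by
      push_cast
      rw [← Finset.mul_sum, geom_sum_eq (by norm_num : (2:ℝ) ≠ 1)]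
      ring
    rw [Finset.sum_add_distrib, Finset.sum_const, Finset.card_range,
      ← Finset.sum_mul, hgeom, nsmul_eq_mul] at hsum
    push_cast at hsum
    have hq : -4 * Real.log 2 ≤ 2 * ((2:ℝ) ^ (N+1) - 1) * Real.log w := by
      have : 2 * ((2:ℝ) ^ (N+1) - 1) * Real.log w ≥ 4 * ((2:ℝ)^N * Real.log w) := by
        have hpow : (2:ℝ)^(N+1) = 2 * 2^N := by ring
        nlinarith [hlogw]
      linarith [h2N]
    push_cast
    linarith [hsum, hq]
  -- total bounds in exp form
  have hStot : (N + 1 : ℝ) * Real.log 3 - 4 * Real.log 2 ≤ H + T ∧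
      H + T ≤ (N + 1 : ℝ) * Real.log 3 + 2 := ⟨by linarith, by linarith⟩
  -- set a = 2^(N+1), u = 1 - w
  set u : ℝ := 1 - w with hu
  have hu0 : 0 < u := by simp only [hu]; linarith
  set a : ℝ := 2 ^ (N + 1) with ha
  have ha0 : (0:ℝ) < a := by positivity
  have hloga : Real.log a = (N + 1 : ℝ) * Real.log 2 := by
    rw [ha, Real.log_pow]; push_cast; ring
  -- a * u bounds
  have hlogw_ub : -Real.log w ≤ 2 * u := by
    have h := Real.log_le_sub_one_of_pos (show (0:ℝ) < w⁻¹ by positivity)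
    rw [Real.log_inv] at h
    have : w⁻¹ - 1 = u / w := by field_simp [hu]; exact hu.symm
    rw [this, le_div_iff₀ hw0] at h
    nlinarith [hlogw, hw1]
  have hlogw_lb : u ≤ -Real.log w := by
    have := Real.log_le_sub_one_of_pos hw0
    simp only [hu]; linarith
  have hau_lb : Real.log 2 / 2 ≤ a * u := by
    have h := Real.log_lt_log (hxpos (2 ^ (N+1))) hN2
    rw [Real.log_pow] at h
    simp only [Real.log_div one_ne_zero two_ne_zero, Real.log_one] at h
    push_cast at h
    -- h : (2:ℝ)^(N+1) * log w < -log 2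
    have h2 : Real.log 2 < a * (-Real.log w) := by
      simp only [ha]; push_cast at h ⊢; nlinarith
    nlinarith [mul_le_mul_of_nonneg_left hlogw_ub ha0.le]
  have hau_ub : a * u ≤ 2 * Real.log 2 := by
    have h2 : (2:ℝ)^N * u ≤ Real.log 2 := by
      nlinarith [mul_le_mul_of_nonneg_left hlogw_lb (by positivity : (0:ℝ) ≤ (2:ℝ)^N), h2N]
    have : a = 2 * 2^N := by rw [ha]; ring
    nlinarith
  -- a^τ = exp((N+1) log 3)
  have haτ : a ^ τ = Real.exp ((N + 1 : ℝ) * Real.log 3) := by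
    rw [Real.rpow_def_of_pos ha0, hloga]
    congr 1
    rw [← hτlog]; ring
  -- u^(-τ) relation
  have huτ : u ^ (-τ) = (u ^ τ)⁻¹ := Real.rpow_neg hu0.le τ
  have huτ0 : (0:ℝ) < u ^ τ := Real.rpow_pos_of_pos hu0 τ
  -- a^τ bounds
  have haτ_lb : (Real.log 2 / 2) ^ τ * u ^ (-τ) ≤ a ^ τ := by
    have h1 : (Real.log 2 / 2) / u ≤ a := by
      rw [div_le_iff₀ hu0]; linarith [hau_lb]
    have h2 : ((Real.log 2 / 2) / u) ^ τ ≤ a ^ τ :=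
      Real.rpow_le_rpow (by positivity) h1 hτ0
    rwa [Real.div_rpow (by positivity) hu0.le, div_eq_mul_inv, ← huτ] at h2
  have haτ_ub : a ^ τ ≤ (2 * Real.log 2) ^ τ * u ^ (-τ) := by
    have h1 : a ≤ (2 * Real.log 2) / u := by
      rw [le_div_iff₀ hu0]; linarith [hau_ub]
    have h2 : a ^ τ ≤ ((2 * Real.log 2) / u) ^ τ :=
      Real.rpow_le_rpow ha0.le h1 hτ0
    rwa [Real.div_rpow (by positivity) hu0.le, div_eq_mul_inv, ← huτ] at h2
  -- finish
  rw [htprod, ← hsplit]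
  have hexp4 : Real.exp (4 * Real.log 2) = 16 := by
    rw [show (4:ℝ) * Real.log 2 = (4:ℕ) * Real.log 2 by norm_num,
      Real.exp_nat_mul, Real.exp_log (by norm_num : (0:ℝ) < 2)]
    norm_num
  constructor
  · calc (Real.log 2 / 2) ^ τ / 16 * u ^ (-τ)
        ≤ a ^ τ / 16 := by
          have := haτ_lb; nlinarith [Real.rpow_pos_of_pos (show (0:ℝ) < Real.log 2 / 2 by positivity) τ, huτ0]
      _ = Real.exp ((N + 1 : ℝ) * Real.log 3 - 4 * Real.log 2) := by
          rw [Real.exp_sub, haτ, hexp4]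
      _ ≤ Real.exp (H + T) := Real.exp_le_exp.2 hStot.1
  · calc Real.exp (H + T) ≤ Real.exp ((N + 1 : ℝ) * Real.log 3 + 2) :=
          Real.exp_le_exp.2 hStot.2
      _ = Real.exp 2 * a ^ τ := by rw [Real.exp_add, haτ]; ring
      _ ≤ Real.exp 2 * ((2 * Real.log 2) ^ τ * u ^ (-τ)) := by
          nlinarith [haτ_ub, Real.exp_pos (2:ℝ)]
      _ = Real.exp 2 * (2 * Real.log 2) ^ τ * u ^ (-τ) := by ring
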